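/- Let X be a compact metric space, α : X → X a homeomorphism, 𝒱 a line bundle, U ⊆ X an open set with 𝒱|_U trivial, and F ⊂ C(X) a finite set of functions all supported in U. Then there exists a section ξ ∈ Γ(𝒱,α) such that, in the Cuntz–Pimsner algebra, ξξ*·(f∘α^{-1}) = f∘α^{-1} and ξ*ξ·f = f for every f ∈ F. -/

import Mathlib

/-!
STATEMENT 19. Let `X` be a compact metric space, `α : X → X` a homeomorphism, `𝒱` a
Hermitian line bundle, `U ⊆ X` open with `𝒱|_U` trivial, and `F ⊂ C(X)` a finite set of
functions supported in `U`.  Then there is a continuous section `ξ ∈ Γ(𝒱,α)` such that,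
in the Cuntz–Pimsner algebra `O(Γ(𝒱,α))` (given by a faithful covariant representation
`(p, t)`), `ξξ*·(f∘α⁻¹) = f∘α⁻¹` and `ξ*ξ·f = f` for every `f ∈ F`.
-/

/-- continuous sections of the line bundle `V` -/
def Sect {X : Type*} [TopologicalSpace X] (V : X → Type*)
    [∀ x, NormedAddCommGroup (V x)] [TopologicalSpace (Bundle.TotalSpace ℂ V)] :
    Type _ :=
  {s : ∀ x, V x // Continuous fun x => (Bundle.TotalSpace.mk x (s x) : Bundle.TotalSpace ℂ V)}

/-- `𝒱` is trivial over `W` (for a line bundle: a continuous unit section over `W`). -/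
def TrivialOver {X : Type*} [TopologicalSpace X] (V : X → Type*)
    [∀ x, NormedAddCommGroup (V x)] [TopologicalSpace (Bundle.TotalSpace ℂ V)]
    (W : Set X) : Prop :=
  ∃ s : ∀ x, V x,
    ContinuousOn (fun x => (Bundle.TotalSpace.mk x (s x) : Bundle.TotalSpace ℂ V)) W ∧
    ∀ x ∈ W, ‖s x‖ = 1

/-- A faithful covariant representation `(p, t)` of the Hilbert `C(X)`-bimodule
`ℰ = Γ(𝒱,α)` on a C*-algebra `B`, generating (a copy of) the Cuntz–Pimsner algebra
`O(Γ(𝒱,α))`. -/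
structure IsCovRep {X : Type*} [TopologicalSpace X] [CompactSpace X] (α : X ≃ₜ X)
    (V : X → Type*) [∀ x, NormedAddCommGroup (V x)] [∀ x, InnerProductSpace ℂ (V x)]
    [TopologicalSpace (Bundle.TotalSpace ℂ V)]
    (B : Type*) [NormedRing B] [StarRing B] [NormedAlgebra ℂ B]
    (p : C(X, ℂ) →⋆ₐ[ℂ] B) (t : Sect V → B) : Prop where
  injective : Function.Injective p
  /-- τ is additive -/
  map_add : ∀ ξ η ζ : Sect V, (∀ x, ζ.1 x = ξ.1 x + η.1 x) → t ζ = t ξ + t η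
  /-- `τ(ξ)* τ(η) = π(⟨ξ,η⟩_R)` -/
  inner_right : ∀ (ξ η : Sect V) (g : C(X, ℂ)),
    (∀ x, (inner ℂ (ξ.1 x) (η.1 x) : ℂ) = g x) → star (t ξ) * t η = p g
  /-- `τ(ξ) τ(η)* = π(⟨ξ,η⟩_L) = π(⟨η,ξ⟩_R ∘ α⁻¹)` (line bundle covariance) -/
  inner_left : ∀ (ξ η : Sect V) (g : C(X, ℂ)),
    (∀ x, (inner ℂ (η.1 (α.symm x)) (ξ.1 (α.symm x)) : ℂ) = g x) →
      t ξ * star (t η) = p g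
  /-- left action: `π(f) τ(ξ) = τ(f·ξ)`, `(f·ξ)(x) = f(α x) • ξ(x)` -/
  left_act : ∀ (f : C(X, ℂ)) (ξ η : Sect V),
    (∀ x, η.1 x = f (α x) • ξ.1 x) → t η = p f * t ξ
  /-- right action: `τ(ξ) π(f) = τ(ξ·f)` -/
  right_act : ∀ (f : C(X, ℂ)) (ξ η : Sect V),
    (∀ x, η.1 x = f x • ξ.1 x) → t η = t ξ * p f

open Bundle in
/-- Scalar multiple of a continuous-at section is continuous at the point. -/
lemma aux_smul_continuousAt
    {X : Type*} [TopologicalSpace X]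
    (V : X → Type*) [∀ x, NormedAddCommGroup (V x)] [∀ x, InnerProductSpace ℂ (V x)]
    [TopologicalSpace (Bundle.TotalSpace ℂ V)] [FiberBundle ℂ V] [VectorBundle ℂ ℂ V]
    (g : X → ℂ) (s : ∀ x, V x) {x₀ : X}
    (hg : ContinuousAt g x₀)
    (hs : ContinuousAt (fun x => (Bundle.TotalSpace.mk x (s x) : Bundle.TotalSpace ℂ V)) x₀) :
    ContinuousAt (fun x => (Bundle.TotalSpace.mk x (g x • s x) : Bundle.TotalSpace ℂ V)) x₀ := by
  rw [FiberBundle.continuousAt_totalSpace]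
  refine ⟨continuousAt_id, ?_⟩
  have hmem : x₀ ∈ (trivializationAt ℂ V x₀).baseSet :=
    FiberBundle.mem_baseSet_trivializationAt' x₀
  have hs' : ContinuousAt
      (fun x => ((trivializationAt ℂ V x₀) (Bundle.TotalSpace.mk x (s x))).2) x₀ :=
    ((FiberBundle.continuousAt_totalSpace ℂ _).mp hs).2
  have heq : ∀ᶠ x in nhds x₀,
      ((trivializationAt ℂ V x₀) (Bundle.TotalSpace.mk x (g x • s x))).2
        = g x • ((trivializationAt ℂ V x₀) (Bundle.TotalSpace.mk x (s x))).2 := by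
    filter_upwards [(trivializationAt ℂ V x₀).open_baseSet.mem_nhds hmem] with x hx
    exact ((trivializationAt ℂ V x₀).linear ℂ hx).map_smul _ _
  exact (hg.smul hs').congr (heq.mono fun x hx => hx.symm)

theorem statement19
    (X : Type*) [MetricSpace X] [CompactSpace X]
    (α : X ≃ₜ X)
    (V : X → Type*) [∀ x, NormedAddCommGroup (V x)] [∀ x, InnerProductSpace ℂ (V x)]
    [TopologicalSpace (Bundle.TotalSpace ℂ V)] [FiberBundle ℂ V] [VectorBundle ℂ ℂ V]
    (B : Type*) [NormedRing B] [StarRing B] [CStarRing B] [NormedAlgebra ℂ B]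
    [CompleteSpace B]
    (p : C(X, ℂ) →⋆ₐ[ℂ] B) (t : Sect V → B)
    (hrep : IsCovRep α V B p t)
    (U : Set X) (hU : IsOpen U) (htriv : TrivialOver V U)
    (F : Finset C(X, ℂ)) (hF : ∀ f ∈ F, tsupport ⇑f ⊆ U) :
    ∃ ξ : Sect V, ∀ f ∈ F,
      -- ξξ* (f∘α⁻¹) = f∘α⁻¹ …
      t ξ * star (t ξ) * p (f.comp ⟨⇑α.symm, α.symm.continuous⟩)
          = p (f.comp ⟨⇑α.symm, α.symm.continuous⟩) ∧
      -- … and ξ*ξ f = f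
      star (t ξ) * t ξ * p f = p f := by
  classical
  obtain ⟨s, hscont, hsnorm⟩ := htriv
  -- the compact set K : union of the supports
  set K : Set X := ⋃ f ∈ F, tsupport ⇑f with hK
  have hKclosed : IsClosed K :=
    (Set.Finite.isClosed_biUnion F.finite_toSet) fun f _ => isClosed_tsupport _
  have hKU : K ⊆ U := Set.iUnion₂_subset hF
  -- Urysohn function
  obtain ⟨γ, hγsupp, hγone, hγmem⟩ :=
    exists_tsupport_one_of_isOpen_isClosed hU
      (IsCompact.of_isClosed_subset isCompact_univ isClosed_closure (Set.subset_univ _))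
      hKclosed hKU
  -- the real square root of γ
  have hγ0 : ∀ x, x ∉ U → γ x = 0 := by
    intro x hx
    by_contra h
    exact hx (hγsupp (subset_tsupport _ h))
  set g : X → ℂ := fun x => (Real.sqrt (γ x) : ℂ) with hg
  have hgcont : Continuous g :=
    Complex.continuous_ofReal.comp (γ.continuous.sqrt)
  -- the section ξ
  set ξf : ∀ x, V x := fun x => g x • s x with hξf
  have hξcont : Continuous fun x => (Bundle.TotalSpace.mk x (ξf x) : Bundle.TotalSpace ℂ V) := by
    rw [continuous_iff_continuousAt]
    intro x₀
    by_cases hx₀ : x₀ ∈ U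
    · exact aux_smul_continuousAt V g s hgcont.continuousAt
        (hscont.continuousAt (hU.mem_nhds hx₀))
    · -- near x₀ the function ξ is the zero section
      have hx₀' : x₀ ∉ tsupport ⇑γ := fun h => hx₀ (hγsupp h)
      have hnhds : (tsupport ⇑γ)ᶜ ∈ nhds x₀ :=
        (isClosed_tsupport _).isOpen_compl.mem_nhds hx₀'
      rw [FiberBundle.continuousAt_totalSpace]
      refine ⟨continuousAt_id, ?_⟩
      have hmem : x₀ ∈ (trivializationAt ℂ V x₀).baseSet :=
        FiberBundle.mem_baseSet_trivializationAt' x₀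
      have heq : ∀ᶠ x in nhds x₀,
          ((trivializationAt ℂ V x₀) (Bundle.TotalSpace.mk x (ξf x))).2 = 0 := by
        filter_upwards [hnhds, (trivializationAt ℂ V x₀).open_baseSet.mem_nhds hmem]
          with x hx hx'
        have hγx : γ x = 0 := image_eq_zero_of_notMem_tsupport hx
        have : ξf x = 0 := by simp [hξf, hg, hγx]
        rw [this]
        have := (trivializationAt ℂ V x₀).zeroSection ℂ hx'
        simpa [Bundle.zeroSection] using congrArg Prod.snd this
      exact continuousAt_const.congr (heq.mono fun x hx => hx.symm)
  set ξ : Sect V := ⟨ξf, hξcont⟩ with hξ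
  -- the inner product of ξ with itself equals γ (as a complex function)
  set γc : C(X, ℂ) := ⟨fun x => (γ x : ℂ), Complex.continuous_ofReal.comp γ.continuous⟩
    with hγc
  have hinner : ∀ x, (inner ℂ (ξ.1 x) (ξ.1 x) : ℂ) = γc x := by
    intro x
    by_cases hx : x ∈ U
    · have h1 : ‖s x‖ = 1 := hsnorm x hx
      have : (inner ℂ (g x • s x) (g x • s x) : ℂ)
          = (starRingEnd ℂ) (g x) * g x * inner ℂ (s x) (s x) := by
        rw [inner_smul_left, inner_smul_right]; ring
      rw [show ξ.1 x = g x • s x from rfl, this]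
      rw [@inner_self_eq_norm_sq_to_K ℂ]
      have hγnn : 0 ≤ γ x := (hγmem x).1
      simp [hg, h1, hγc, ← Complex.ofReal_mul, Real.mul_self_sqrt hγnn]
    · have hγx : γ x = 0 := hγ0 x hx
      have : ξ.1 x = 0 := by
        show g x • s x = 0
        simp [hg, hγx]
      rw [this]
      simp [hγc, hγx]
  -- the two algebra relations
  have hR : star (t ξ) * t ξ = p γc := hrep.inner_right ξ ξ γc hinner
  set γca : C(X, ℂ) := γc.comp ⟨⇑α.symm, α.symm.continuous⟩ with hγca
  have hL : t ξ * star (t ξ) = p γca :=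
    hrep.inner_left ξ ξ γca fun x => hinner (α.symm x)
  -- γ is 1 on the support of each f ∈ F
  have hγf : ∀ f ∈ F, γc * f = f := by
    intro f hf
    ext x
    by_cases hfx : f x = 0
    · simp [hfx]
    · have hxK : x ∈ K := Set.mem_biUnion hf (subset_tsupport _ hfx)
      have : γ x = 1 := hγone hxK
      simp [hγc, this]
  refine ⟨ξ, fun f hf => ?_⟩
  constructor
  · rw [hL, ← map_mul]
    congr 1
    ext x
    have := congrFun (congrArg (fun h : C(X, ℂ) => (h : X → ℂ)) (hγf f hf)) (α.symm x)
    simpa [hγca] using this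
  · rw [hR, ← map_mul, hγf f hf]
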